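/- Let f, g : [a,b] → ℝ₊ be integrable functions with 0 < m ≤ f(x) ≤ M < ∞ and 0 < n ≤ g(x) ≤ N < ∞ for x ∈ [a,b]. Then |T(f,g;a,b)| ≤ (1/4) · ((M-m)(N-n)/√(mnMN)) · ((1/(b-a))∫_a^b f(x) dx) · ((1/(b-a))∫_a^b g(x) dx), where T(f,g;a,b) = (1/(b-a))∫_a^b fg - ((1/(b-a))∫_a^b f)((1/(b-a))∫_a^b g). -/

import Mathlib

open MeasureTheory intervalIntegral

private lemma cs_integral (μ : Measure ℝ) (u v : ℝ → ℝ)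
    (hu2 : Integrable (fun x => u x * u x) μ)
    (hv2 : Integrable (fun x => v x * v x) μ)
    (huv : Integrable (fun x => u x * v x) μ) :
    (∫ x, u x * v x ∂μ) ^ 2 ≤ (∫ x, u x * u x ∂μ) * (∫ x, v x * v x ∂μ) := by
  have key : ∀ t : ℝ, 0 ≤ (∫ x, v x * v x ∂μ) * (t * t) +
      (2 * ∫ x, u x * v x ∂μ) * t + ∫ x, u x * u x ∂μ := by
    intro t
    have h1 : Integrable (fun x => (2 * t) * (u x * v x)) μ := huv.const_mul _
    have h2 : Integrable (fun x => (t * t) * (v x * v x)) μ := hv2.const_mul _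
    have heq : ∫ x, (u x + t * v x) ^ 2 ∂μ
        = (∫ x, v x * v x ∂μ) * (t * t) + (2 * ∫ x, u x * v x ∂μ) * t
          + ∫ x, u x * u x ∂μ := by
      have hfe : (fun x => (u x + t * v x) ^ 2)
          = fun x => u x * u x + ((2 * t) * (u x * v x) + (t * t) * (v x * v x)) := by
        funext x; ring
      have h12 : Integrable (fun x => (2 * t) * (u x * v x) + (t * t) * (v x * v x)) μ :=
        h1.add h2
      rw [hfe, integral_add hu2 h12, integral_add h1 h2,
        MeasureTheory.integral_const_mul, MeasureTheory.integral_const_mul]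
      ring
    rw [← heq]
    exact integral_nonneg fun x => sq_nonneg _
  have hd := discrim_le_zero key
  rw [discrim] at hd
  nlinarith [hd]

set_option maxHeartbeats 1600000 in
theorem dragomir_diamond
    (a b m M n N : ℝ) (hab : a < b) (f g : ℝ → ℝ)
    (hm : 0 < m) (hn : 0 < n)
    (hf : IntervalIntegrable f volume a b)
    (hg : IntervalIntegrable g volume a b)
    (hfg : IntervalIntegrable (fun x => f x * g x) volume a b)
    (hfb : ∀ x ∈ Set.Icc a b, m ≤ f x ∧ f x ≤ M)
    (hgb : ∀ x ∈ Set.Icc a b, n ≤ g x ∧ g x ≤ N) :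
    |(1 / (b - a)) * ∫ x in a..b, f x * g x -
      ((1 / (b - a)) * ∫ x in a..b, f x) *
      ((1 / (b - a)) * ∫ x in a..b, g x)| ≤
    (1 / 4) * ((M - m) * (N - n) / Real.sqrt (m * n * M * N)) *
      ((1 / (b - a)) * ∫ x in a..b, f x) *
      ((1 / (b - a)) * ∫ x in a..b, g x) := by
  have hle := hab.le
  have hc0 : (0:ℝ) < b - a := sub_pos.mpr hab
  have haI : a ∈ Set.Icc a b := ⟨le_refl a, hle⟩
  have hmM : m ≤ M := le_trans (hfb a haI).1 (hfb a haI).2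
  have hnN : n ≤ N := le_trans (hgb a haI).1 (hgb a haI).2
  have hM : (0:ℝ) < M := lt_of_lt_of_le hm hmM
  have hN : (0:ℝ) < N := lt_of_lt_of_le hn hnN
  rw [intervalIntegral.integral_of_le hle, intervalIntegral.integral_of_le hle,
    intervalIntegral.integral_of_le hle]
  set μ := volume.restrict (Set.Ioc a b) with hμdef
  set c := b - a with hcdef
  haveI : IsFiniteMeasure μ := by
    constructor
    rw [hμdef, Measure.restrict_apply_univ, Real.volume_Ioc]
    exact ENNReal.ofReal_lt_top
  have hμuniv : μ.real Set.univ = c := by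
    rw [measureReal_def, hμdef, Measure.restrict_apply_univ, Real.volume_Ioc,
      ENNReal.toReal_ofReal hc0.le]
  have haes : ∀ᵐ x ∂μ, x ∈ Set.Ioc a b := ae_restrict_mem measurableSet_Ioc
  have hfae : ∀ᵐ x ∂μ, m ≤ f x ∧ f x ≤ M :=
    haes.mono fun x hx => hfb x (Set.Ioc_subset_Icc_self hx)
  have hgae : ∀ᵐ x ∂μ, n ≤ g x ∧ g x ≤ N :=
    haes.mono fun x hx => hgb x (Set.Ioc_subset_Icc_self hx)
  have hfi : Integrable f μ := (intervalIntegrable_iff_integrableOn_Ioc_of_le hle).mp hf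
  have hgi : Integrable g μ := (intervalIntegrable_iff_integrableOn_Ioc_of_le hle).mp hg
  have hfgi : Integrable (fun x => f x * g x) μ :=
    (intervalIntegrable_iff_integrableOn_Ioc_of_le hle).mp hfg
  have hf2i : Integrable (fun x => f x * f x) μ := by
    refine (hfi.const_mul M).mono' (hfi.1.mul hfi.1) ?_
    filter_upwards [hfae] with x hx
    have h0 : 0 < f x := lt_of_lt_of_le hm hx.1
    rw [Real.norm_eq_abs, abs_of_nonneg (by positivity)]
    nlinarith [hx.2]
  have hg2i : Integrable (fun x => g x * g x) μ := by
    refine (hgi.const_mul N).mono' (hgi.1.mul hgi.1) ?_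
    filter_upwards [hgae] with x hx
    have h0 : 0 < g x := lt_of_lt_of_le hn hx.1
    rw [Real.norm_eq_abs, abs_of_nonneg (by positivity)]
    nlinarith [hx.2]
  clear_value μ c
  set A := ∫ x, f x ∂μ with hAdef
  set B := ∫ x, g x ∂μ with hBdef
  set C := ∫ x, f x * g x ∂μ with hCdef
  set P := ∫ x, f x * f x ∂μ with hPdef
  set Q := ∫ x, g x * g x ∂μ with hQdef
  clear_value A B C P Q
  -- bounds on A and B
  have hA1 : m * c ≤ A := by
    have h := integral_mono_ae (integrable_const m) hfi (hfae.mono fun x hx => hx.1)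
    rw [MeasureTheory.integral_const, hμuniv, smul_eq_mul, mul_comm] at h
    rw [hAdef]
    exact h
  have hB1 : n * c ≤ B := by
    have h := integral_mono_ae (integrable_const n) hgi (hgae.mono fun x hx => hx.1)
    rw [MeasureTheory.integral_const, hμuniv, smul_eq_mul, mul_comm] at h
    rw [hBdef]
    exact h
  have hA0 : 0 < A := lt_of_lt_of_le (by positivity) hA1
  have hB0 : 0 < B := lt_of_lt_of_le (by positivity) hB1
  -- integrability of the centered products
  have hu2 : Integrable (fun x => (f x - A / c) * (f x - A / c)) μ := by
    have hfe : (fun x => (f x - A / c) * (f x - A / c))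
        = fun x => f x * f x - (2 * (A / c)) * f x + (A / c) * (A / c) := by
      funext x; ring
    rw [hfe]
    exact (hf2i.sub (hfi.const_mul _)).add (integrable_const _)
  have hv2 : Integrable (fun x => (g x - B / c) * (g x - B / c)) μ := by
    have hfe : (fun x => (g x - B / c) * (g x - B / c))
        = fun x => g x * g x - (2 * (B / c)) * g x + (B / c) * (B / c) := by
      funext x; ring
    rw [hfe]
    exact (hg2i.sub (hgi.const_mul _)).add (integrable_const _)
  have huv : Integrable (fun x => (f x - A / c) * (g x - B / c)) μ := by
    have hfe : (fun x => (f x - A / c) * (g x - B / c))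
        = fun x => f x * g x - (B / c) * f x - (A / c) * g x + (A / c) * (B / c) := by
      funext x; ring
    rw [hfe]
    exact ((hfgi.sub (hfi.const_mul _)).sub (hgi.const_mul _)).add (integrable_const _)
  -- values of the centered integrals
  have hU : ∫ x, (f x - A / c) * (f x - A / c) ∂μ = P - A ^ 2 / c := by
    have hfe : (fun x => (f x - A / c) * (f x - A / c))
        = fun x => f x * f x - (2 * (A / c)) * f x + (A / c) * (A / c) := by
      funext x; ring
    have ha1 : Integrable (fun x => f x * f x - (2 * (A / c)) * f x) μ :=
      hf2i.sub (hfi.const_mul _)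
    have ha2 : Integrable (fun x => (2 * (A / c)) * f x) μ := hfi.const_mul _
    rw [hfe, integral_add ha1 (integrable_const _),
      integral_sub hf2i ha2, MeasureTheory.integral_const_mul, MeasureTheory.integral_const,
      hμuniv, smul_eq_mul, ← hAdef, ← hPdef]
    field_simp
    ring
  have hV : ∫ x, (g x - B / c) * (g x - B / c) ∂μ = Q - B ^ 2 / c := by
    have hfe : (fun x => (g x - B / c) * (g x - B / c))
        = fun x => g x * g x - (2 * (B / c)) * g x + (B / c) * (B / c) := by
      funext x; ring
    have ha1 : Integrable (fun x => g x * g x - (2 * (B / c)) * g x) μ :=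
      hg2i.sub (hgi.const_mul _)
    have ha2 : Integrable (fun x => (2 * (B / c)) * g x) μ := hgi.const_mul _
    rw [hfe, integral_add ha1 (integrable_const _),
      integral_sub hg2i ha2, MeasureTheory.integral_const_mul, MeasureTheory.integral_const,
      hμuniv, smul_eq_mul, ← hBdef, ← hQdef]
    field_simp
    ring
  have hUV : ∫ x, (f x - A / c) * (g x - B / c) ∂μ = C - A * B / c := by
    have hfe : (fun x => (f x - A / c) * (g x - B / c))
        = fun x => f x * g x - (B / c) * f x - (A / c) * g x + (A / c) * (B / c) := by
      funext x; ring
    have hb1 : Integrable (fun x => (B / c) * f x) μ := hfi.const_mul _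
    have hb2 : Integrable (fun x => (A / c) * g x) μ := hgi.const_mul _
    have ha1 : Integrable (fun x => f x * g x - (B / c) * f x) μ := hfgi.sub hb1
    have ha2 : Integrable (fun x => f x * g x - (B / c) * f x - (A / c) * g x) μ :=
      ha1.sub hb2
    rw [hfe, integral_add ha2 (integrable_const _),
      integral_sub ha1 hb2,
      integral_sub hfgi hb1, MeasureTheory.integral_const_mul, MeasureTheory.integral_const_mul,
      MeasureTheory.integral_const, hμuniv, smul_eq_mul, ← hAdef, ← hBdef, ← hCdef]
    field_simp
    ring
  -- Cauchy–Schwarz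
  have hCS : (C - A * B / c) ^ 2 ≤ (P - A ^ 2 / c) * (Q - B ^ 2 / c) := by
    have := cs_integral μ _ _ hu2 hv2 huv
    rwa [hU, hV, hUV] at this
  -- nonnegativity of the variances
  have hP0 : 0 ≤ P - A ^ 2 / c := by
    rw [← hU]; exact integral_nonneg fun x => mul_self_nonneg _
  have hQ0 : 0 ≤ Q - B ^ 2 / c := by
    rw [← hV]; exact integral_nonneg fun x => mul_self_nonneg _
  -- the quadratic bound for f
  have hPb : P - A ^ 2 / c ≤ (M - m) ^ 2 * A ^ 2 / (4 * (m * M) * c) := by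
    have h1 : 0 ≤ ∫ x, (M - f x) * (f x - m) ∂μ :=
      integral_nonneg_of_ae (hfae.mono fun x hx =>
        mul_nonneg (sub_nonneg.2 hx.2) (sub_nonneg.2 hx.1))
    have h2 : ∫ x, (M - f x) * (f x - m) ∂μ = (M + m) * A - P - m * M * c := by
      have hfe : (fun x => (M - f x) * (f x - m))
          = fun x => (M + m) * f x - f x * f x - m * M := by
        funext x; ring
      have hb1 : Integrable (fun x => (M + m) * f x) μ := hfi.const_mul _
      have ha1 : Integrable (fun x => (M + m) * f x - f x * f x) μ := hb1.sub hf2i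
      rw [hfe, integral_sub ha1 (integrable_const _),
        integral_sub hb1 hf2i, MeasureTheory.integral_const_mul, MeasureTheory.integral_const,
        hμuniv, smul_eq_mul, ← hAdef, ← hPdef]
      ring
    have h3 : P ≤ (M + m) * A - m * M * c := by linarith [h2 ▸ h1]
    have h4 : 0 ≤ ((M + m) * A - 2 * m * M * c) ^ 2 := sq_nonneg _
    rw [le_div_iff₀ (by positivity)]
    have hc' : A ^ 2 / c * c = A ^ 2 := div_mul_cancel₀ _ hc0.ne'
    calc (P - A ^ 2 / c) * (4 * (m * M) * c)
        ≤ ((M + m) * A - m * M * c - A ^ 2 / c) * (4 * (m * M) * c) :=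
          mul_le_mul_of_nonneg_right (by linarith) (by positivity)
      _ = 4 * (m * M) * c * ((M + m) * A) - 4 * (m * M) ^ 2 * c ^ 2
          - 4 * (m * M) * (A ^ 2 / c * c) := by ring
      _ = 4 * (m * M) * c * ((M + m) * A) - 4 * (m * M) ^ 2 * c ^ 2
          - 4 * (m * M) * A ^ 2 := by rw [hc']
      _ ≤ (M - m) ^ 2 * A ^ 2 := by nlinarith [h4]
  have hQb : Q - B ^ 2 / c ≤ (N - n) ^ 2 * B ^ 2 / (4 * (n * N) * c) := by
    have h1 : 0 ≤ ∫ x, (N - g x) * (g x - n) ∂μ :=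
      integral_nonneg_of_ae (hgae.mono fun x hx =>
        mul_nonneg (sub_nonneg.2 hx.2) (sub_nonneg.2 hx.1))
    have h2 : ∫ x, (N - g x) * (g x - n) ∂μ = (N + n) * B - Q - n * N * c := by
      have hfe : (fun x => (N - g x) * (g x - n))
          = fun x => (N + n) * g x - g x * g x - n * N := by
        funext x; ring
      have hb1 : Integrable (fun x => (N + n) * g x) μ := hgi.const_mul _
      have ha1 : Integrable (fun x => (N + n) * g x - g x * g x) μ := hb1.sub hg2i
      rw [hfe, integral_sub ha1 (integrable_const _),
        integral_sub hb1 hg2i, MeasureTheory.integral_const_mul, MeasureTheory.integral_const,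
        hμuniv, smul_eq_mul, ← hBdef, ← hQdef]
      ring
    have h3 : Q ≤ (N + n) * B - n * N * c := by linarith [h2 ▸ h1]
    have h4 : 0 ≤ ((N + n) * B - 2 * n * N * c) ^ 2 := sq_nonneg _
    rw [le_div_iff₀ (by positivity)]
    have hc' : B ^ 2 / c * c = B ^ 2 := div_mul_cancel₀ _ hc0.ne'
    calc (Q - B ^ 2 / c) * (4 * (n * N) * c)
        ≤ ((N + n) * B - n * N * c - B ^ 2 / c) * (4 * (n * N) * c) :=
          mul_le_mul_of_nonneg_right (by linarith) (by positivity)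
      _ = 4 * (n * N) * c * ((N + n) * B) - 4 * (n * N) ^ 2 * c ^ 2
          - 4 * (n * N) * (B ^ 2 / c * c) := by ring
      _ = 4 * (n * N) * c * ((N + n) * B) - 4 * (n * N) ^ 2 * c ^ 2
          - 4 * (n * N) * B ^ 2 := by rw [hc']
      _ ≤ (N - n) ^ 2 * B ^ 2 := by nlinarith [h4]
  -- combine
  set s := Real.sqrt (m * n * M * N) with hsdef
  have hs0 : 0 < s := Real.sqrt_pos.mpr (by positivity)
  have hs2 : s ^ 2 = m * n * M * N := Real.sq_sqrt (by positivity)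
  clear_value s
  set X := C - A * B / c with hXdef
  clear_value X
  have h7 : X ^ 2 ≤ (M - m) ^ 2 * (N - n) ^ 2 * A ^ 2 * B ^ 2
      / (16 * (m * n * M * N) * c ^ 2) := by
    have h6 : (P - A ^ 2 / c) * (Q - B ^ 2 / c)
        ≤ ((M - m) ^ 2 * A ^ 2 / (4 * (m * M) * c))
          * ((N - n) ^ 2 * B ^ 2 / (4 * (n * N) * c)) :=
      mul_le_mul hPb hQb hQ0 (hP0.trans hPb)
    have heq : ((M - m) ^ 2 * A ^ 2 / (4 * (m * M) * c))
        * ((N - n) ^ 2 * B ^ 2 / (4 * (n * N) * c))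
        = (M - m) ^ 2 * (N - n) ^ 2 * A ^ 2 * B ^ 2
          / (16 * (m * n * M * N) * c ^ 2) := by
      field_simp
      ring
    calc X ^ 2 ≤ (P - A ^ 2 / c) * (Q - B ^ 2 / c) := hCS
      _ ≤ _ := heq ▸ h6
  set R := 1 / 4 * ((M - m) * (N - n) / s) * (1 / c * A) * (1 / c * B) with hRdef
  clear_value R
  have hR0 : 0 ≤ R := by
    have h1 : 0 ≤ (M - m) * (N - n) / s :=
      div_nonneg (mul_nonneg (sub_nonneg.2 hmM) (sub_nonneg.2 hnN)) hs0.le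
    have h2 : 0 ≤ 1 / c * A := by positivity
    have h3 : 0 ≤ 1 / c * B := by positivity
    rw [hRdef]
    have h0 : (0:ℝ) ≤ 1 / 4 := by norm_num
    exact mul_nonneg (mul_nonneg (mul_nonneg h0 h1) h2) h3
  have hRsq : R ^ 2 = (M - m) ^ 2 * (N - n) ^ 2 * A ^ 2 * B ^ 2
      / (16 * (m * n * M * N) * c ^ 4) := by
    rw [hRdef, ← hs2]
    field_simp
    ring
  have hgoal : |X / c| ≤ R := by
    have h8 : (X / c) ^ 2 ≤ R ^ 2 := by
      rw [div_pow, hRsq]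
      rw [div_le_div_iff₀ (by positivity) (by positivity)]
      calc X ^ 2 * (16 * (m * n * M * N) * c ^ 4)
          = (X ^ 2 * (16 * (m * n * M * N) * c ^ 2)) * c ^ 2 := by ring
        _ ≤ ((M - m) ^ 2 * (N - n) ^ 2 * A ^ 2 * B ^ 2) * c ^ 2 := by
            have h9 : X ^ 2 * (16 * (m * n * M * N) * c ^ 2)
                ≤ (M - m) ^ 2 * (N - n) ^ 2 * A ^ 2 * B ^ 2 :=
              (le_div_iff₀ (by positivity)).mp h7
            exact mul_le_mul_of_nonneg_right h9 (sq_nonneg c)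
        _ = (M - m) ^ 2 * (N - n) ^ 2 * A ^ 2 * B ^ 2 * c ^ 2 := by ring
    calc |X / c| = Real.sqrt ((X / c) ^ 2) := (Real.sqrt_sq_eq_abs _).symm
      _ ≤ Real.sqrt (R ^ 2) := Real.sqrt_le_sqrt h8
      _ = R := Real.sqrt_sq hR0
  have hsplit : ∫ x, (f x * g x - 1 / c * A * (1 / c * B)) ∂μ = C - A * B / c := by
    rw [integral_sub hfgi (integrable_const _), MeasureTheory.integral_const, hμuniv,
      smul_eq_mul, ← hCdef]
    field_simp
  rw [hsplit]
  have hlhs : 1 / c * (C - A * B / c) = X / c := by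
    rw [hXdef]
    field_simp
  rw [hlhs]
  exact hgoal
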